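/- In sl(7), the 24-dimensional subspace g spanned by {H^P_{k+1,7−k} : k=0,1,2} ∪ {H_i^⊥ : i=1,2,3} ∪ {E_{p,t} : p=1,2,3; t=2,…,7; p<t} ∪ {E_{4,6}, E_{4,7}, E_{5,7}} is a Lie subalgebra, and the span g_P of {E_{p,t} : p=1,2,3; t=4,5,6,7} is a 12-dimensional abelian ideal of g. -/

import Mathlib

/- STATEMENT 19: In sl(7), the 24-dimensional subspace g spanned by
{H^P_{k+1,7−k} : k=0,1,2} ∪ {H_i^⊥ : i=1,2,3} ∪ {E_{p,t} : p=1,2,3; t=2,…,7; p<t}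
∪ {E_{4,6}, E_{4,7}, E_{5,7}} is a Lie subalgebra, and
g_P = span{E_{p,t} : p=1,2,3; t=4,…,7} is a 12-dimensional abelian ideal of g.
Here H^P_{k+1,7−k} = (1/7)(7E_{k+1,k+1} − Σ_s E_{ss}) and H_i^⊥ is the traceless
peripheric Cartan element ((7−2i)/7)Σ_l E_{ll} − Σ_{m=i+1}^{7−i} E_{mm}.
(Indices translated to 0-based.) -/

open Matrix

attribute [local instance 100] LieRing.ofAssociativeRing

noncomputable section
set_option linter.unusedSectionVars false
set_option maxHeartbeats 1000000

variable (K : Type) [Field K] [CharZero K]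

def E7 (i j : Fin 7) : Matrix (Fin 7) (Fin 7) K := single i j 1

/-- `H^P_{k+1,7−k}` (with `k` 0-based row label). -/
def HP7 (k : Fin 7) : Matrix (Fin 7) (Fin 7) K :=
  (7 : K)⁻¹ • ((7 : K) • E7 K k k - ∑ s : Fin 7, E7 K s s)

/-- `H_i^⊥ = ((7−2i)/7) Σ_l E_{ll} − Σ_{m=i+1}^{7−i} E_{mm}` (1-based label `i`). -/
def Hperp7 (i : ℕ) : Matrix (Fin 7) (Fin 7) K :=
  (((7 : K) - 2 * i) / 7) • (1 : Matrix (Fin 7) (Fin 7) K) -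
    ∑ m : Fin 7, if i ≤ (m : ℕ) ∧ (m : ℕ) ≤ 6 - i then E7 K m m else 0

/-- The spanning set of g. -/
def gSet7 : Set (Matrix (Fin 7) (Fin 7) K) :=
  {x | (∃ k : Fin 7, (k : ℕ) ≤ 2 ∧ x = HP7 K k) ∨
       (∃ i : ℕ, 1 ≤ i ∧ i ≤ 3 ∧ x = Hperp7 K i) ∨
       (∃ p t : Fin 7, (p : ℕ) ≤ 2 ∧ p < t ∧ x = E7 K p t) ∨
       x = E7 K 3 5 ∨ x = E7 K 3 6 ∨ x = E7 K 4 6}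

/-- The translation part g_P. -/
def gP7 : Submodule K (Matrix (Fin 7) (Fin 7) K) :=
  Submodule.span K {x | ∃ p t : Fin 7, (p : ℕ) ≤ 2 ∧ 3 ≤ (t : ℕ) ∧ x = E7 K p t}


namespace Stmt19

/-! ### auxiliary: the "pattern" subalgebra description -/

def allowedP (i j : Fin 7) : Prop :=
  i = j ∨ (i < j ∧ ¬((i = 3 ∧ j = 4) ∨ (i = 4 ∧ j = 5) ∨ (i = 5 ∧ j = 6)))

instance (i j : Fin 7) : Decidable (allowedP i j) := by unfold allowedP; infer_instance

lemma allowed_trans : ∀ i b j : Fin 7, allowedP i b → allowedP b j → allowedP i j := by decide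

def W : Submodule K (Matrix (Fin 7) (Fin 7) K) where
  carrier := {x | Matrix.trace x = 0 ∧ ∀ i j, ¬ allowedP i j → x i j = 0}
  add_mem' := by
    rintro a b ⟨ta, ha⟩ ⟨tb, hb⟩
    exact ⟨by simp [ta, tb], fun i j h => by simp [ha i j h, hb i j h]⟩
  zero_mem' := ⟨by simp, fun i j _ => rfl⟩
  smul_mem' := by
    rintro c a ⟨ta, ha⟩
    exact ⟨by simp [ta], fun i j h => by simp [ha i j h]⟩

def WP : Submodule K (Matrix (Fin 7) (Fin 7) K) where
  carrier := {x | ∀ i j : Fin 7, ¬ ((i : ℕ) ≤ 2 ∧ 3 ≤ (j : ℕ)) → x i j = 0}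
  add_mem' := by
    intro a b ha hb
    exact fun i j h => by simp [ha i j h, hb i j h]
  zero_mem' := fun i j _ => rfl
  smul_mem' := by
    intro c a ha
    exact fun i j h => by simp [ha i j h]

lemma W_bracket {x y : Matrix (Fin 7) (Fin 7) K} (hx : x ∈ W K) (hy : y ∈ W K) :
    ⁅x, y⁆ ∈ W K := by
  obtain ⟨tx, hx⟩ := hx
  obtain ⟨ty, hy⟩ := hy
  constructor
  · simp [Ring.lie_def, Matrix.trace_mul_comm x y]
  · intro i j h
    simp only [Ring.lie_def, Matrix.sub_apply, Matrix.mul_apply]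
    have h1 : ∀ b : Fin 7, x i b * y b j = 0 := by
      intro b
      by_cases hib : allowedP i b
      · have : ¬ allowedP b j := fun hbj => h (allowed_trans i b j hib hbj)
        simp [hy b j this]
      · simp [hx i b hib]
    have h2 : ∀ b : Fin 7, y i b * x b j = 0 := by
      intro b
      by_cases hib : allowedP i b
      · have : ¬ allowedP b j := fun hbj => h (allowed_trans i b j hib hbj)
        simp [hx b j this]
      · simp [hy i b hib]
    simp [h1, h2]

lemma WP_bracket {x y : Matrix (Fin 7) (Fin 7) K} (hx : x ∈ W K) (hy : y ∈ WP K) :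
    ⁅x, y⁆ ∈ WP K := by
  obtain ⟨tx, hx⟩ := hx
  intro i j h
  simp only [Ring.lie_def, Matrix.sub_apply, Matrix.mul_apply]
  have hA : ∀ i b : Fin 7, allowedP i b → (b : ℕ) ≤ 2 → (i : ℕ) ≤ 2 := by decide
  have hB : ∀ b j : Fin 7, allowedP b j → (b : ℕ) ≤ (j : ℕ) := by decide
  have h1 : ∀ b : Fin 7, x i b * y b j = 0 := by
    intro b
    by_cases hib : allowedP i b
    · have : ¬ ((b : ℕ) ≤ 2 ∧ 3 ≤ (j : ℕ)) := by
        rintro ⟨hb2, hj3⟩; exact h ⟨hA i b hib hb2, hj3⟩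
      simp [hy b j this]
    · simp [hx i b hib]
  have h2 : ∀ b : Fin 7, y i b * x b j = 0 := by
    intro b
    by_cases hib : (i : ℕ) ≤ 2 ∧ 3 ≤ (b : ℕ)
    · have : ¬ allowedP b j := fun hbj => by
        have := hB b j hbj
        exact h ⟨hib.1, by omega⟩
      simp [hx b j this]
    · simp [hy i b hib]
  simp [h1, h2]

lemma WP_abelian {x y : Matrix (Fin 7) (Fin 7) K} (hx : x ∈ WP K) (hy : y ∈ WP K) :
    ⁅x, y⁆ = 0 := by
  ext i j
  simp only [Ring.lie_def, Matrix.sub_apply, Matrix.mul_apply, Matrix.zero_apply]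
  have h1 : ∀ (u v : Matrix (Fin 7) (Fin 7) K), u ∈ WP K → v ∈ WP K →
      ∀ b : Fin 7, u i b * v b j = 0 := by
    intro u v hu hv b
    by_cases hb : 3 ≤ (b : ℕ)
    · have : ¬ ((b : ℕ) ≤ 2 ∧ 3 ≤ (j : ℕ)) := by omega
      simp [hv b j this]
    · have : ¬ ((i : ℕ) ≤ 2 ∧ 3 ≤ (b : ℕ)) := by omega
      simp [hu i b this]
  simp [h1 x y hx hy, h1 y x hy hx]

/-! ### closed forms for the Cartan generators -/

lemma sum_diag : (∑ s : Fin 7, E7 K s s) = 1 := by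
  ext a b
  by_cases h : a = b
  · subst h
    simp [Matrix.sum_apply, E7, Matrix.single, Matrix.one_apply]
  · simp only [Matrix.sum_apply, E7, Matrix.single, Matrix.of_apply,
      Matrix.one_apply, if_neg h]
    apply Finset.sum_eq_zero
    intro x _
    rw [if_neg]
    rintro ⟨rfl, rfl⟩
    exact h rfl

lemma HP7_eq (k : Fin 7) : HP7 K k = E7 K k k - (7 : K)⁻¹ • 1 := by
  rw [HP7, sum_diag, smul_sub, smul_smul, inv_mul_cancel₀ (by norm_num : (7:K) ≠ 0), one_smul]

lemma Hperp1_eq : Hperp7 K 1 =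
    (5/7 : K) • 1 - (E7 K 1 1 + E7 K 2 2 + E7 K 3 3 + E7 K 4 4 + E7 K 5 5) := by
  rw [Hperp7, Fin.sum_univ_seven]
  simp only [show ((0:Fin 7):ℕ) = 0 by rfl, show ((1:Fin 7):ℕ) = 1 by rfl,
    show ((2:Fin 7):ℕ) = 2 by rfl, show ((3:Fin 7):ℕ) = 3 by rfl,
    show ((4:Fin 7):ℕ) = 4 by rfl, show ((5:Fin 7):ℕ) = 5 by rfl,
    show ((6:Fin 7):ℕ) = 6 by rfl]
  norm_num

lemma Hperp2_eq : Hperp7 K 2 =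
    (3/7 : K) • 1 - (E7 K 2 2 + E7 K 3 3 + E7 K 4 4) := by
  rw [Hperp7, Fin.sum_univ_seven]
  simp only [show ((0:Fin 7):ℕ) = 0 by rfl, show ((1:Fin 7):ℕ) = 1 by rfl,
    show ((2:Fin 7):ℕ) = 2 by rfl, show ((3:Fin 7):ℕ) = 3 by rfl,
    show ((4:Fin 7):ℕ) = 4 by rfl, show ((5:Fin 7):ℕ) = 5 by rfl,
    show ((6:Fin 7):ℕ) = 6 by rfl]
  norm_num

lemma Hperp3_eq : Hperp7 K 3 = (1/7 : K) • 1 - E7 K 3 3 := by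
  rw [Hperp7, Fin.sum_univ_seven]
  simp only [show ((0:Fin 7):ℕ) = 0 by rfl, show ((1:Fin 7):ℕ) = 1 by rfl,
    show ((2:Fin 7):ℕ) = 2 by rfl, show ((3:Fin 7):ℕ) = 3 by rfl,
    show ((4:Fin 7):ℕ) = 4 by rfl, show ((5:Fin 7):ℕ) = 5 by rfl,
    show ((6:Fin 7):ℕ) = 6 by rfl]
  norm_num

lemma hp3 : HP7 K 3 = -Hperp7 K 3 := by
  rw [HP7_eq, Hperp3_eq]; module

lemma hp4 : HP7 K 4 = Hperp7 K 3 - Hperp7 K 2 - HP7 K 2 := by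
  rw [HP7_eq, HP7_eq, Hperp3_eq, Hperp2_eq]; module

lemma hp5 : HP7 K 5 = Hperp7 K 2 - Hperp7 K 1 - HP7 K 1 := by
  rw [HP7_eq, HP7_eq, Hperp2_eq, Hperp1_eq]; module

lemma h66 : E7 K 6 6 = 1 - (E7 K 0 0 + E7 K 1 1 + E7 K 2 2 + E7 K 3 3 + E7 K 4 4 + E7 K 5 5) := by
  have h1 := sum_diag K
  rw [Fin.sum_univ_seven] at h1
  rw [← h1]; abel

lemma hp6 : HP7 K 6 = -(HP7 K 0 + HP7 K 1 + HP7 K 2 + HP7 K 3 + HP7 K 4 + HP7 K 5) := by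
  simp only [HP7_eq]
  rw [h66]
  module

/-! ### the explicit basis family of g -/

def D (k : Fin 7) : Matrix (Fin 7) (Fin 7) K := E7 K k k - E7 K 6 6

def F : Fin 24 → Matrix (Fin 7) (Fin 7) K :=
 ![D K 0, D K 1, D K 2, D K 3, D K 4, D K 5,
   E7 K 0 1, E7 K 0 2, E7 K 0 3, E7 K 0 4, E7 K 0 5, E7 K 0 6,
   E7 K 1 2, E7 K 1 3, E7 K 1 4, E7 K 1 5, E7 K 1 6,
   E7 K 2 3, E7 K 2 4, E7 K 2 5, E7 K 2 6,
   E7 K 3 5, E7 K 3 6, E7 K 4 6]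

lemma hpD (k : Fin 7) : D K k = HP7 K k - HP7 K 6 := by
  rw [D, HP7_eq, HP7_eq]; module

lemma hHPmem (k : Fin 7) : HP7 K k ∈ Submodule.span K (gSet7 K) := by
  have g0 : ∀ k : Fin 7, (k : ℕ) ≤ 2 → HP7 K k ∈ Submodule.span K (gSet7 K) :=
    fun k hk => Submodule.subset_span (Or.inl ⟨k, hk, rfl⟩)
  have g1 : ∀ i : ℕ, 1 ≤ i → i ≤ 3 → Hperp7 K i ∈ Submodule.span K (gSet7 K) :=
    fun i h1 h2 => Submodule.subset_span (Or.inr (Or.inl ⟨i, h1, h2, rfl⟩))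
  have m3 : HP7 K 3 ∈ Submodule.span K (gSet7 K) := by
    rw [hp3]; exact neg_mem (g1 3 (by norm_num) (by norm_num))
  have m4 : HP7 K 4 ∈ Submodule.span K (gSet7 K) := by
    rw [hp4]
    exact sub_mem (sub_mem (g1 3 (by norm_num) (by norm_num))
      (g1 2 (by norm_num) (by norm_num))) (g0 2 (by decide))
  have m5 : HP7 K 5 ∈ Submodule.span K (gSet7 K) := by
    rw [hp5]
    exact sub_mem (sub_mem (g1 2 (by norm_num) (by norm_num))
      (g1 1 (by norm_num) (by norm_num))) (g0 1 (by decide))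
  have m6 : HP7 K 6 ∈ Submodule.span K (gSet7 K) := by
    rw [hp6]
    exact neg_mem (add_mem (add_mem (add_mem (add_mem (add_mem
      (g0 0 (by decide)) (g0 1 (by decide))) (g0 2 (by decide))) m3) m4) m5)
  fin_cases k
  · exact g0 0 (by decide)
  · exact g0 1 (by decide)
  · exact g0 2 (by decide)
  · exact m3
  · exact m4
  · exact m5
  · exact m6

lemma hEmem (p t : Fin 7) (hp : (p : ℕ) ≤ 2) (hpt : p < t) :
    E7 K p t ∈ Submodule.span K (gSet7 K) :=
  Submodule.subset_span (Or.inr (Or.inr (Or.inl ⟨p, t, hp, hpt, rfl⟩)))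

lemma rangeF_le : ∀ i : Fin 24, F K i ∈ Submodule.span K (gSet7 K) := by
  intro i
  have hD : ∀ k : Fin 7, D K k ∈ Submodule.span K (gSet7 K) := by
    intro k; rw [hpD]; exact sub_mem (hHPmem K k) (hHPmem K 6)
  fin_cases i <;>
    first
      | exact hD _
      | exact hEmem K _ _ (by decide) (by decide)
      | exact Submodule.subset_span (Or.inr (Or.inr (Or.inr (Or.inl rfl))))
      | exact Submodule.subset_span (Or.inr (Or.inr (Or.inr (Or.inr (Or.inl rfl)))))
      | exact Submodule.subset_span (Or.inr (Or.inr (Or.inr (Or.inr (Or.inr rfl)))))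

/-! ### generators lie in W -/

lemma offdiag_E (u i j : Fin 7) (hij : i ≠ j) : E7 K u u i j = 0 := by
  rw [E7]
  apply Matrix.single_apply_of_ne
  rintro ⟨rfl, rfl⟩
  exact hij rfl

lemma diag_mem_W (x : Matrix (Fin 7) (Fin 7) K) (h1 : Matrix.trace x = 0)
    (h2 : ∀ i j, i ≠ j → x i j = 0) : x ∈ W K :=
  ⟨h1, fun i j h => h2 i j (fun e => h (Or.inl e))⟩

lemma gen_le_W : gSet7 K ⊆ (W K : Set (Matrix (Fin 7) (Fin 7) K)) := by
  rintro x (⟨k, hk, rfl⟩ | ⟨i, hi1, hi3, rfl⟩ | ⟨p, t, hp, hpt, rfl⟩ | rfl | rfl | rfl)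
  · refine diag_mem_W K _ ?_ ?_
    · rw [HP7_eq]
      simp [E7, Matrix.trace_smul, Matrix.trace_one, Matrix.trace_single_eq_same]
    · intro i j hij
      simp [HP7_eq, Matrix.sub_apply, Matrix.smul_apply, Matrix.one_apply_ne hij,
        offdiag_E, hij]
  · interval_cases i
    · refine diag_mem_W K _ ?_ ?_
      · rw [Hperp1_eq]
        norm_num [E7, Matrix.trace_smul, Matrix.trace_one, Matrix.trace_single_eq_same]
      · intro i j hij
        simp [Hperp1_eq, Matrix.sub_apply, Matrix.add_apply, Matrix.smul_apply,
          Matrix.one_apply_ne hij, offdiag_E, hij]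
    · refine diag_mem_W K _ ?_ ?_
      · rw [Hperp2_eq]
        norm_num [E7, Matrix.trace_smul, Matrix.trace_one, Matrix.trace_single_eq_same]
      · intro i j hij
        simp [Hperp2_eq, Matrix.sub_apply, Matrix.add_apply, Matrix.smul_apply,
          Matrix.one_apply_ne hij, offdiag_E, hij]
    · refine diag_mem_W K _ ?_ ?_
      · rw [Hperp3_eq]
        norm_num [E7, Matrix.trace_smul, Matrix.trace_one, Matrix.trace_single_eq_same]
      · intro i j hij
        simp [Hperp3_eq, Matrix.sub_apply, Matrix.smul_apply,
          Matrix.one_apply_ne hij, offdiag_E, hij]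
  · have hall : allowedP p t := by
      refine Or.inr ⟨hpt, ?_⟩
      rintro (⟨rfl, rfl⟩ | ⟨rfl, rfl⟩ | ⟨rfl, rfl⟩) <;> exact absurd hp (by decide)
    refine ⟨?_, ?_⟩
    · rw [E7]; exact Matrix.trace_single_eq_of_ne _ _ _ hpt.ne
    · intro i j h
      rw [E7]
      apply Matrix.single_apply_of_ne
      rintro ⟨rfl, rfl⟩
      exact h hall
  · refine ⟨?_, ?_⟩
    · rw [E7]; exact Matrix.trace_single_eq_of_ne _ _ _ (by decide)
    · intro i j h
      rw [E7]
      apply Matrix.single_apply_of_ne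
      rintro ⟨rfl, rfl⟩
      exact h (by decide)
  · refine ⟨?_, ?_⟩
    · rw [E7]; exact Matrix.trace_single_eq_of_ne _ _ _ (by decide)
    · intro i j h
      rw [E7]
      apply Matrix.single_apply_of_ne
      rintro ⟨rfl, rfl⟩
      exact h (by decide)
  · refine ⟨?_, ?_⟩
    · rw [E7]; exact Matrix.trace_single_eq_of_ne _ _ _ (by decide)
    · intro i j h
      rw [E7]
      apply Matrix.single_apply_of_ne
      rintro ⟨rfl, rfl⟩
      exact h (by decide)

/-! ### decomposition lemmas -/

lemma W_decomp (x : Matrix (Fin 7) (Fin 7) K) (hx1 : Matrix.trace x = 0)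
    (hx2 : ∀ i j, ¬ allowedP i j → x i j = 0) :
    x = x 0 0 • D K 0 + x 1 1 • D K 1 + x 2 2 • D K 2 + x 3 3 • D K 3 + x 4 4 • D K 4
      + x 5 5 • D K 5
      + x 0 1 • E7 K 0 1 + x 0 2 • E7 K 0 2 + x 0 3 • E7 K 0 3 + x 0 4 • E7 K 0 4
      + x 0 5 • E7 K 0 5 + x 0 6 • E7 K 0 6
      + x 1 2 • E7 K 1 2 + x 1 3 • E7 K 1 3 + x 1 4 • E7 K 1 4 + x 1 5 • E7 K 1 5
      + x 1 6 • E7 K 1 6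
      + x 2 3 • E7 K 2 3 + x 2 4 • E7 K 2 4 + x 2 5 • E7 K 2 5 + x 2 6 • E7 K 2 6
      + x 3 5 • E7 K 3 5 + x 3 6 • E7 K 3 6 + x 4 6 • E7 K 4 6 := by
  have ht : x 0 0 + x 1 1 + x 2 2 + x 3 3 + x 4 4 + x 5 5 + x 6 6 = 0 := by
    rw [Matrix.trace, Fin.sum_univ_seven] at hx1
    exact hx1
  have hts : x 6 6 = -(x 0 0 + x 1 1 + x 2 2 + x 3 3 + x 4 4 + x 5 5) := by
    linear_combination ht
  have hdec := matrix_eq_sum_single x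
  simp only [Fin.sum_univ_seven] at hdec
  rw [hx2 1 0 (by decide), hx2 2 0 (by decide), hx2 2 1 (by decide),
    hx2 3 0 (by decide), hx2 3 1 (by decide), hx2 3 2 (by decide), hx2 3 4 (by decide),
    hx2 4 0 (by decide), hx2 4 1 (by decide), hx2 4 2 (by decide), hx2 4 3 (by decide),
    hx2 4 5 (by decide),
    hx2 5 0 (by decide), hx2 5 1 (by decide), hx2 5 2 (by decide), hx2 5 3 (by decide),
    hx2 5 4 (by decide), hx2 5 6 (by decide),
    hx2 6 0 (by decide), hx2 6 1 (by decide), hx2 6 2 (by decide), hx2 6 3 (by decide),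
    hx2 6 4 (by decide), hx2 6 5 (by decide)] at hdec
  simp only [Matrix.single_zero] at hdec
  have hsm : ∀ (i j : Fin 7), single i j (x i j) = x i j • single i j (1:K) := by
    intro i j; rw [smul_single, smul_eq_mul, mul_one]
  simp only [hsm] at hdec
  rw [hts] at hdec
  calc x = _ := hdec
    _ = _ := by simp only [D, E7]; module

lemma WP_decomp (x : Matrix (Fin 7) (Fin 7) K)
    (hx : ∀ i j : Fin 7, ¬ ((i : ℕ) ≤ 2 ∧ 3 ≤ (j : ℕ)) → x i j = 0) :
    x = x 0 3 • E7 K 0 3 + x 0 4 • E7 K 0 4 + x 0 5 • E7 K 0 5 + x 0 6 • E7 K 0 6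
      + x 1 3 • E7 K 1 3 + x 1 4 • E7 K 1 4 + x 1 5 • E7 K 1 5 + x 1 6 • E7 K 1 6
      + x 2 3 • E7 K 2 3 + x 2 4 • E7 K 2 4 + x 2 5 • E7 K 2 5 + x 2 6 • E7 K 2 6 := by
  have hdec := matrix_eq_sum_single x
  simp only [Fin.sum_univ_seven] at hdec
  rw [hx 0 0 (by decide), hx 0 1 (by decide), hx 0 2 (by decide), hx 1 0 (by decide), hx 1 1 (by
    decide), hx 1 2 (by decide), hx 2 0 (by decide), hx 2 1 (by decide), hx 2 2 (by decide), hx 3 0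
    (by decide), hx 3 1 (by decide), hx 3 2 (by decide), hx 3 3 (by decide), hx 3 4 (by decide), hx
    3 5 (by decide), hx 3 6 (by decide), hx 4 0 (by decide), hx 4 1 (by decide), hx 4 2 (by decide),
    hx 4 3 (by decide), hx 4 4 (by decide), hx 4 5 (by decide), hx 4 6 (by decide), hx 5 0 (by
    decide), hx 5 1 (by decide), hx 5 2 (by decide), hx 5 3 (by decide), hx 5 4 (by decide), hx 5 5
    (by decide), hx 5 6 (by decide), hx 6 0 (by decide), hx 6 1 (by decide), hx 6 2 (by decide), hx
    6 3 (by decide), hx 6 4 (by decide), hx 6 5 (by decide), hx 6 6 (by decide)] at hdec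
  simp only [Matrix.single_zero] at hdec
  have hsm : ∀ (i j : Fin 7), single i j (x i j) = x i j • single i j (1:K) := by
    intro i j; rw [smul_single, smul_eq_mul, mul_one]
  simp only [hsm] at hdec
  calc x = _ := hdec
    _ = _ := by simp only [E7]; module

/-! ### linear independence -/

lemma F_indep : LinearIndependent K (F K) := by
  rw [Fintype.linearIndependent_iff]
  intro c h
  simp only [Fin.sum_univ_succ, Fin.sum_univ_zero, F, Matrix.cons_val_zero,
    Matrix.cons_val_succ, add_zero] at h
  have he := Matrix.ext_iff.mpr h
  have stdap : ∀ (a b u v : Fin 7) (c : K), single a b c u v = if a = u ∧ b = v then c else 0 := fun _ _ _ _ _ => rfl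
  have h00 := he 0 0
  have h11 := he 1 1
  have h22 := he 2 2
  have h33 := he 3 3
  have h44 := he 4 4
  have h55 := he 5 5
  have e01 := he 0 1
  have e02 := he 0 2
  have e03 := he 0 3
  have e04 := he 0 4
  have e05 := he 0 5
  have e06 := he 0 6
  have e12 := he 1 2
  have e13 := he 1 3
  have e14 := he 1 4
  have e15 := he 1 5
  have e16 := he 1 6
  have e23 := he 2 3
  have e24 := he 2 4
  have e25 := he 2 5
  have e26 := he 2 6
  have e35 := he 3 5
  have e36 := he 3 6
  have e46 := he 4 6
  simp (config := { decide := true }) only [D, E7, Matrix.add_apply, Matrix.sub_apply, Matrix.smul_apply, Matrix.zero_apply, smul_eq_mul, stdap] at h00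
  norm_num at h00
  simp (config := { decide := true }) only [D, E7, Matrix.add_apply, Matrix.sub_apply, Matrix.smul_apply, Matrix.zero_apply, smul_eq_mul, stdap] at h11
  norm_num at h11
  simp (config := { decide := true }) only [D, E7, Matrix.add_apply, Matrix.sub_apply, Matrix.smul_apply, Matrix.zero_apply, smul_eq_mul, stdap] at h22
  norm_num at h22
  simp (config := { decide := true }) only [D, E7, Matrix.add_apply, Matrix.sub_apply, Matrix.smul_apply, Matrix.zero_apply, smul_eq_mul, stdap] at h33
  norm_num at h33
  simp (config := { decide := true }) only [D, E7, Matrix.add_apply, Matrix.sub_apply, Matrix.smul_apply, Matrix.zero_apply, smul_eq_mul, stdap] at h44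
  norm_num at h44
  simp (config := { decide := true }) only [D, E7, Matrix.add_apply, Matrix.sub_apply, Matrix.smul_apply, Matrix.zero_apply, smul_eq_mul, stdap] at h55
  norm_num at h55
  simp (config := { decide := true }) only [D, E7, Matrix.add_apply, Matrix.sub_apply, Matrix.smul_apply, Matrix.zero_apply, smul_eq_mul, stdap] at e01
  norm_num at e01
  simp (config := { decide := true }) only [D, E7, Matrix.add_apply, Matrix.sub_apply, Matrix.smul_apply, Matrix.zero_apply, smul_eq_mul, stdap] at e02
  norm_num at e02
  simp (config := { decide := true }) only [D, E7, Matrix.add_apply, Matrix.sub_apply, Matrix.smul_apply, Matrix.zero_apply, smul_eq_mul, stdap] at e03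
  norm_num at e03
  simp (config := { decide := true }) only [D, E7, Matrix.add_apply, Matrix.sub_apply, Matrix.smul_apply, Matrix.zero_apply, smul_eq_mul, stdap] at e04
  norm_num at e04
  simp (config := { decide := true }) only [D, E7, Matrix.add_apply, Matrix.sub_apply, Matrix.smul_apply, Matrix.zero_apply, smul_eq_mul, stdap] at e05
  norm_num at e05
  simp (config := { decide := true }) only [D, E7, Matrix.add_apply, Matrix.sub_apply, Matrix.smul_apply, Matrix.zero_apply, smul_eq_mul, stdap] at e06
  norm_num at e06
  simp (config := { decide := true }) only [D, E7, Matrix.add_apply, Matrix.sub_apply, Matrix.smul_apply, Matrix.zero_apply, smul_eq_mul, stdap] at e12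
  norm_num at e12
  simp (config := { decide := true }) only [D, E7, Matrix.add_apply, Matrix.sub_apply, Matrix.smul_apply, Matrix.zero_apply, smul_eq_mul, stdap] at e13
  norm_num at e13
  simp (config := { decide := true }) only [D, E7, Matrix.add_apply, Matrix.sub_apply, Matrix.smul_apply, Matrix.zero_apply, smul_eq_mul, stdap] at e14
  norm_num at e14
  simp (config := { decide := true }) only [D, E7, Matrix.add_apply, Matrix.sub_apply, Matrix.smul_apply, Matrix.zero_apply, smul_eq_mul, stdap] at e15
  norm_num at e15
  simp (config := { decide := true }) only [D, E7, Matrix.add_apply, Matrix.sub_apply, Matrix.smul_apply, Matrix.zero_apply, smul_eq_mul, stdap] at e16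
  norm_num at e16
  simp (config := { decide := true }) only [D, E7, Matrix.add_apply, Matrix.sub_apply, Matrix.smul_apply, Matrix.zero_apply, smul_eq_mul, stdap] at e23
  norm_num at e23
  simp (config := { decide := true }) only [D, E7, Matrix.add_apply, Matrix.sub_apply, Matrix.smul_apply, Matrix.zero_apply, smul_eq_mul, stdap] at e24
  norm_num at e24
  simp (config := { decide := true }) only [D, E7, Matrix.add_apply, Matrix.sub_apply, Matrix.smul_apply, Matrix.zero_apply, smul_eq_mul, stdap] at e25
  norm_num at e25
  simp (config := { decide := true }) only [D, E7, Matrix.add_apply, Matrix.sub_apply, Matrix.smul_apply, Matrix.zero_apply, smul_eq_mul, stdap] at e26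
  norm_num at e26
  simp (config := { decide := true }) only [D, E7, Matrix.add_apply, Matrix.sub_apply, Matrix.smul_apply, Matrix.zero_apply, smul_eq_mul, stdap] at e35
  norm_num at e35
  simp (config := { decide := true }) only [D, E7, Matrix.add_apply, Matrix.sub_apply, Matrix.smul_apply, Matrix.zero_apply, smul_eq_mul, stdap] at e36
  norm_num at e36
  simp (config := { decide := true }) only [D, E7, Matrix.add_apply, Matrix.sub_apply, Matrix.smul_apply, Matrix.zero_apply, smul_eq_mul, stdap] at e46
  norm_num at e46
  intro i
  fin_cases i
  exacts [h00, h11, h22, h33, h44, h55, e01, e02, e03, e04, e05, e06, e12, e13, e14, e15, e16, e23, e24, e25, e26, e35, e36, e46]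

def gmap : Fin 3 × Fin 4 → Fin 7 × Fin 7 :=
  fun q => (⟨q.1.val, by omega⟩, ⟨q.2.val + 3, by omega⟩)

def f12 : Fin 3 × Fin 4 → Matrix (Fin 7) (Fin 7) K :=
  fun q => E7 K (gmap q).1 (gmap q).2

lemma f12_indep : LinearIndependent K (f12 K) := by
  have hcomp : f12 K = (Matrix.stdBasis K (Fin 7) (Fin 7)) ∘ gmap := by
    funext q
    rw [Function.comp_apply]
    show E7 K (gmap q).1 (gmap q).2 = Matrix.stdBasis K (Fin 7) (Fin 7) ((gmap q).1, (gmap q).2)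
    rw [Matrix.stdBasis_eq_single, E7]
  rw [hcomp]
  exact (Matrix.stdBasis K (Fin 7) (Fin 7)).linearIndependent.comp gmap (by decide)

lemma gPset_eq : {x : Matrix (Fin 7) (Fin 7) K | ∃ p t : Fin 7, (p : ℕ) ≤ 2 ∧ 3 ≤ (t : ℕ) ∧ x = E7 K p t}
    = Set.range (f12 K) := by
  ext x
  constructor
  · rintro ⟨p, t, hp, ht, rfl⟩
    obtain ⟨pv, hpv⟩ := p
    obtain ⟨tv, htv⟩ := t
    have hp' : pv ≤ 2 := hp
    have ht' : 3 ≤ tv := ht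
    refine ⟨(⟨pv, by omega⟩, ⟨tv - 3, by omega⟩), ?_⟩
    have e2 : (⟨tv - 3 + 3, by omega⟩ : Fin 7) = ⟨tv, htv⟩ := Fin.ext (by
      show tv - 3 + 3 = tv
      omega)
    show E7 K ⟨pv, by omega⟩ ⟨tv - 3 + 3, by omega⟩ = E7 K ⟨pv, hpv⟩ ⟨tv, htv⟩
    rw [e2]
  · rintro ⟨q, rfl⟩
    exact ⟨(gmap q).1, (gmap q).2, by
      obtain ⟨⟨a, ha⟩, ⟨b, hb⟩⟩ := q
      exact Nat.lt_succ_iff.mp ha, by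
      obtain ⟨⟨a, ha⟩, ⟨b, hb⟩⟩ := q
      simp [gmap], rfl⟩

end Stmt19

theorem stmt19 :
    (∃ S : LieSubalgebra K (Matrix (Fin 7) (Fin 7) K),
      (S : Submodule K (Matrix (Fin 7) (Fin 7) K)) = Submodule.span K (gSet7 K)) ∧
    Module.finrank K (Submodule.span K (gSet7 K)) = 24 ∧
    Module.finrank K (gP7 K) = 12 ∧
    gP7 K ≤ Submodule.span K (gSet7 K) ∧
    (∀ x ∈ Submodule.span K (gSet7 K), ∀ y ∈ gP7 K, ⁅x, y⁆ ∈ gP7 K) ∧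
    (∀ x ∈ gP7 K, ∀ y ∈ gP7 K, ⁅x, y⁆ = 0) := by
  classical
  -- span(gSet7) = W = span(range F)
  have le1 : Submodule.span K (gSet7 K) ≤ Stmt19.W K :=
    Submodule.span_le.mpr (Stmt19.gen_le_W K)
  have le2 : Stmt19.W K ≤ Submodule.span K (Set.range (Stmt19.F K)) := by
    rintro x ⟨hx1, hx2⟩
    rw [Stmt19.W_decomp K x hx1 hx2]
    have m : ∀ i : Fin 24, Stmt19.F K i ∈ Submodule.span K (Set.range (Stmt19.F K)) :=
      fun i => Submodule.subset_span ⟨i, rfl⟩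
    exact add_mem (add_mem (add_mem (add_mem (add_mem (add_mem (add_mem (add_mem (add_mem
      (add_mem (add_mem (add_mem (add_mem (add_mem (add_mem (add_mem (add_mem (add_mem
      (add_mem (add_mem (add_mem (add_mem (add_mem
      (Submodule.smul_mem _ _ (m 0)) (Submodule.smul_mem _ _ (m 1)))
      (Submodule.smul_mem _ _ (m 2))) (Submodule.smul_mem _ _ (m 3)))
      (Submodule.smul_mem _ _ (m 4))) (Submodule.smul_mem _ _ (m 5)))
      (Submodule.smul_mem _ _ (m 6))) (Submodule.smul_mem _ _ (m 7)))
      (Submodule.smul_mem _ _ (m 8))) (Submodule.smul_mem _ _ (m 9)))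
      (Submodule.smul_mem _ _ (m 10))) (Submodule.smul_mem _ _ (m 11)))
      (Submodule.smul_mem _ _ (m 12))) (Submodule.smul_mem _ _ (m 13)))
      (Submodule.smul_mem _ _ (m 14))) (Submodule.smul_mem _ _ (m 15)))
      (Submodule.smul_mem _ _ (m 16))) (Submodule.smul_mem _ _ (m 17)))
      (Submodule.smul_mem _ _ (m 18))) (Submodule.smul_mem _ _ (m 19)))
      (Submodule.smul_mem _ _ (m 20))) (Submodule.smul_mem _ _ (m 21)))
      (Submodule.smul_mem _ _ (m 22))) (Submodule.smul_mem _ _ (m 23))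
  have le3 : Submodule.span K (Set.range (Stmt19.F K)) ≤ Submodule.span K (gSet7 K) := by
    rw [Submodule.span_le]
    rintro x ⟨i, rfl⟩
    exact Stmt19.rangeF_le K i
  have hWeq : Submodule.span K (gSet7 K) = Stmt19.W K :=
    le_antisymm le1 (le2.trans le3)
  have hFeq : Submodule.span K (gSet7 K) = Submodule.span K (Set.range (Stmt19.F K)) :=
    le_antisymm (le1.trans le2) le3
  -- gP7 facts
  have hgPF : gP7 K = Submodule.span K (Set.range (Stmt19.f12 K)) := by
    rw [gP7, Stmt19.gPset_eq]
  have gP_le_WP : gP7 K ≤ Stmt19.WP K := by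
    rw [gP7, Submodule.span_le]
    rintro x ⟨p, t, hp, ht, rfl⟩
    intro i j h
    rw [E7]
    apply Matrix.single_apply_of_ne
    rintro ⟨rfl, rfl⟩
    exact h ⟨hp, ht⟩
  have WP_le_gP : Stmt19.WP K ≤ gP7 K := by
    intro x hx
    rw [Stmt19.WP_decomp K x hx]
    have m : ∀ (p t : Fin 7), (p : ℕ) ≤ 2 → 3 ≤ (t : ℕ) → E7 K p t ∈ gP7 K :=
      fun p t hp ht => Submodule.subset_span ⟨p, t, hp, ht, rfl⟩
    exact add_mem (add_mem (add_mem (add_mem (add_mem (add_mem (add_mem (add_mem (add_mem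
      (add_mem (add_mem
      (Submodule.smul_mem _ _ (m 0 3 (by decide) (by decide)))
      (Submodule.smul_mem _ _ (m 0 4 (by decide) (by decide))))
      (Submodule.smul_mem _ _ (m 0 5 (by decide) (by decide))))
      (Submodule.smul_mem _ _ (m 0 6 (by decide) (by decide))))
      (Submodule.smul_mem _ _ (m 1 3 (by decide) (by decide))))
      (Submodule.smul_mem _ _ (m 1 4 (by decide) (by decide))))
      (Submodule.smul_mem _ _ (m 1 5 (by decide) (by decide))))
      (Submodule.smul_mem _ _ (m 1 6 (by decide) (by decide))))
      (Submodule.smul_mem _ _ (m 2 3 (by decide) (by decide))))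
      (Submodule.smul_mem _ _ (m 2 4 (by decide) (by decide))))
      (Submodule.smul_mem _ _ (m 2 5 (by decide) (by decide))))
      (Submodule.smul_mem _ _ (m 2 6 (by decide) (by decide)))
  have hgPWP : gP7 K = Stmt19.WP K := le_antisymm gP_le_WP WP_le_gP
  refine ⟨?_, ?_, ?_, ?_, ?_, ?_⟩
  · refine ⟨{ toSubmodule := Submodule.span K (gSet7 K), lie_mem' := ?_ }, rfl⟩
    intro x y hx hy
    have hx' : x ∈ Stmt19.W K := hWeq ▸ hx
    have hy' : y ∈ Stmt19.W K := hWeq ▸ hy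
    show ⁅x, y⁆ ∈ Submodule.span K (gSet7 K)
    rw [hWeq]
    exact Stmt19.W_bracket K hx' hy'
  · rw [hFeq]
    rw [finrank_span_eq_card (Stmt19.F_indep K)]
    simp
  · rw [hgPF, finrank_span_eq_card (Stmt19.f12_indep K)]
    simp
  · rw [gP7, Submodule.span_le]
    rintro x ⟨p, t, hp, ht, rfl⟩
    exact Stmt19.hEmem K p t hp (by rw [Fin.lt_def]; omega)
  · intro x hx y hy
    rw [hgPWP] at hy ⊢
    exact Stmt19.WP_bracket K (hWeq ▸ hx) hy
  · intro x hx y hy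
    rw [hgPWP] at hx hy
    exact Stmt19.WP_abelian K hx hy

end
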